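/- Let K be a field, R an amenable affine K-algebra without zero divisors, and let V̄_1 ⊆ V_1 ⊆ V̄_2 ⊆ V_2 ⊆ ⋯ be finite-dimensional subspaces such that {V_n} is a Følner exhaustion, dim_K(V̄_n)/dim_K(V_n) → 1, and for every finite-dimensional subspace Z ⊆ R there is k with V̄_n + V̄_n·Z ⊆ V_n whenever n > k. Let {e_i}_{i=1}^∞ be a K-basis of R such that for each i the first dim_K(V̄_i) basis vectors form a basis of V̄_i and the first dim_K(V_i) basis vectors form a basis of V_i. Then for every nonzero s ∈ R, setting F_k(s) = {e_j ∈ V_k : e_j·s ∉ V_k} and B_k(s) = {e_j ∉ V_k : e_j·s ∈ V_k}, one has |F_k(s)|/dim_K(V_k) → 0 and |B_k(s)|/dim_K(V_k) → 0 as k → ∞. -/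
import Mathlib


open Filter Module

/-- `W·r`: the image of the finite dimensional subspace `W` under right multiplication
by `r`. -/
noncomputable def rightMulSubmodule (K : Type*) [Field K] {R : Type*} [Ring R] [Algebra K R]
    (W : Submodule K R) (r : R) : Submodule K R :=
  W.map (LinearMap.mulRight K r)

/-- A Følner exhaustion of a `K`-algebra `R`: an increasing sequence of finite dimensional
subspaces exhausting `R` such that for every `r ∈ R`,
`dim (Wₙ·r + Wₙ) / dim Wₙ → 1`. -/
def FolnerExhaustion (K : Type*) [Field K] (R : Type*) [Ring R] [Algebra K R]
    (W : ℕ → Submodule K R) : Prop :=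
  Monotone W ∧ (∀ n, FiniteDimensional K (W n)) ∧ (∀ x : R, ∃ n, x ∈ W n) ∧
    ∀ r : R,
      Tendsto (fun n => (finrank K ↥(rightMulSubmodule K (W n) r ⊔ W n) : ℝ) / finrank K (W n))
        atTop (nhds 1)

/-- An affine algebra is (left) amenable if it admits a Følner exhaustion. -/
def AmenableAlgebra (K : Type*) [Field K] (R : Type*) [Ring R] [Algebra K R] : Prop :=
  ∃ W : ℕ → Submodule K R, FolnerExhaustion K R W

lemma basis_mem_span_iff {K M : Type*} [Field K] [AddCommGroup M] [Module K M]
    (e : Basis ℕ K M) (T : Set ℕ) (j : ℕ) :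
    e j ∈ Submodule.span K (⇑e '' T) ↔ j ∈ T := by
  constructor
  · intro h
    by_contra hj
    exact e.linearIndependent.notMem_span_image hj h
  · intro h
    exact Submodule.subset_span ⟨j, h, rfl⟩

/-- Given an amenable affine algebra without zero divisors, the nested sequence
`V̄₁ ⊆ V₁ ⊆ V̄₂ ⊆ V₂ ⊆ ⋯` as in Lemma 3, and a basis `{eᵢ}` adapted to it (initial segments
of the basis span the `V̄ᵢ` and the `Vᵢ`), for every nonzero `s ∈ R` the proportions
`|F_k(s)|/dim V_k` and `|B_k(s)|/dim V_k` tend to `0`, where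
`F_k(s) = {e_j ∈ V_k : e_j·s ∉ V_k}` and `B_k(s) = {e_j ∉ V_k : e_j·s ∈ V_k}`. -/
theorem folner_boundary_vanishes (K : Type*) [Field K] (R : Type*) [Ring R] [Algebra K R]
    [Algebra.FiniteType K R] [NoZeroDivisors R]
    (hR : AmenableAlgebra K R)
    (Vb V : ℕ → Submodule K R)
    (hfin : ∀ n, FiniteDimensional K (Vb n))
    (hVbV : ∀ n, Vb n ≤ V n) (hVVb : ∀ n, V n ≤ Vb (n + 1))
    (hFol : FolnerExhaustion K R V)
    (hratio : Filter.Tendsto (fun n => (finrank K (Vb n) : ℝ) / finrank K (V n))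
      Filter.atTop (nhds 1))
    (habs : ∀ Z : Submodule K R, FiniteDimensional K Z →
      ∃ k, ∀ n > k, Vb n ⊔ Vb n * Z ≤ V n)
    (e : Basis ℕ K R)
    (heVb : ∀ i, Submodule.span K (⇑e '' {j | j < finrank K (Vb i)}) = Vb i)
    (heV : ∀ i, Submodule.span K (⇑e '' {j | j < finrank K (V i)}) = V i)
    (s : R) (hs : s ≠ 0) :
    Filter.Tendsto
      (fun k => (({j | e j ∈ V k ∧ e j * s ∉ V k} : Set ℕ).ncard : ℝ) / finrank K (V k))
      Filter.atTop (nhds 0) ∧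
    Filter.Tendsto
      (fun k => (({j | e j ∉ V k ∧ e j * s ∈ V k} : Set ℕ).ncard : ℝ) / finrank K (V k))
      Filter.atTop (nhds 0) := by
  haveI hVfin : ∀ n, FiniteDimensional K (V n) := hFol.2.1
  set d : ℕ → ℕ := fun k => finrank K (V k) with hd
  set b : ℕ → ℕ := fun k => finrank K (Vb k) with hb
  have hmemV : ∀ k j, e j ∈ V k ↔ j < d k := by
    intro k j
    rw [← heV k]
    exact basis_mem_span_iff e {j | j < d k} j
  have hmemVb : ∀ k j, e j ∈ Vb k ↔ j < b k := by
    intro k j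
    rw [← heVb k]
    exact basis_mem_span_iff e {j | j < b k} j
  have hbd : ∀ k, b k ≤ d k := fun k => Submodule.finrank_mono (hVbV k)
  obtain ⟨k0, hk0⟩ := habs (Submodule.span K {s})
    (inferInstanceAs (FiniteDimensional K ↥(K ∙ s)))
  have hmul : ∀ k, k0 < k → ∀ j, j < b k → e j * s ∈ V k := by
    intro k hk j hj
    have h1 : e j * s ∈ Vb k * Submodule.span K {s} :=
      Submodule.mul_mem_mul ((hmemVb k j).mpr hj) (Submodule.mem_span_singleton_self s)
    exact hk0 k hk
      ((le_sup_right : Vb k * Submodule.span K {s} ≤ Vb k ⊔ Vb k * Submodule.span K {s}) h1)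
  have hker : LinearMap.ker (LinearMap.mulRight K s) = ⊥ := by
    rw [LinearMap.ker_eq_bot']
    intro x hx
    simp only [LinearMap.mulRight_apply] at hx
    exact (mul_eq_zero.mp hx).resolve_right hs
  have hli : ∀ (T : Set ℕ), LinearIndependent K (fun j : T => e ↑j * s) := by
    intro T
    have h1 : LinearIndependent K (fun j : T => e ↑j) :=
      e.linearIndependent.comp _ Subtype.val_injective
    exact h1.map' (LinearMap.mulRight K s) hker
  -- bound on the forward boundary
  have hF : ∀ k, k0 < k → ({j | e j ∈ V k ∧ e j * s ∉ V k} : Set ℕ).ncard ≤ d k - b k := by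
    intro k hk
    have hsub : {j | e j ∈ V k ∧ e j * s ∉ V k} ⊆ Set.Ico (b k) (d k) := by
      intro j hj
      refine ⟨?_, (hmemV k j).mp hj.1⟩
      by_contra h
      exact hj.2 (hmul k hk j (lt_of_not_ge h))
    calc ({j | e j ∈ V k ∧ e j * s ∉ V k} : Set ℕ).ncard
        ≤ (Set.Ico (b k) (d k)).ncard := Set.ncard_le_ncard hsub (Set.finite_Ico _ _)
      _ = d k - b k := by rw [← Finset.coe_Ico, Set.ncard_coe_finset, Nat.card_Ico]
  -- bound on the backward boundary
  have hB : ∀ k, k0 < k → ({j | e j ∉ V k ∧ e j * s ∈ V k} : Set ℕ).ncard ≤ d k - b k := by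
    intro k hk
    set S : Set ℕ := {j | e j ∉ V k ∧ e j * s ∈ V k} with hS
    set T : Set ℕ := S ∪ Set.Iio (b k) with hT
    have hmemT : ∀ j : T, e ↑j * s ∈ V k := by
      rintro ⟨j, hj | hj⟩
      · exact hj.2
      · exact hmul k hk j hj
    have hliT : LinearIndependent K (fun j : T => (⟨e ↑j * s, hmemT j⟩ : V k)) := by
      apply LinearIndependent.of_comp (V k).subtype
      exact hli T
    haveI : Finite ↥T := hliT.finite
    have hTfin : T.Finite := Set.toFinite T
    have hcardT : T.ncard ≤ d k := by
      haveI := hTfin.fintype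
      rw [Set.ncard_eq_toFinset_card', Set.toFinset_card]
      exact hliT.fintype_card_le_finrank
    have hdisj : Disjoint S (Set.Iio (b k)) := by
      rw [Set.disjoint_left]
      intro j hjS hjI
      exact hjS.1 ((hmemV k j).mpr (lt_of_lt_of_le hjI (hbd k)))
    have hSfin : S.Finite := hTfin.subset Set.subset_union_left
    have hsum : S.ncard + b k ≤ d k := by
      have hu := Set.ncard_union_eq hdisj hSfin (Set.finite_Iio _)
      have hIio : (Set.Iio (b k)).ncard = b k := by
        rw [← Finset.coe_Iio, Set.ncard_coe_finset, Nat.card_Iio]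
      rw [hIio] at hu
      rw [← hu]
      exact hcardT
    exact Nat.le_sub_of_add_le hsum
  -- limits
  have hd1 : ∀ᶠ k in atTop, 0 < d k := by
    obtain ⟨N, hN⟩ := hFol.2.2.1 s
    filter_upwards [eventually_ge_atTop N] with k hk
    have hsV : s ∈ V k := hFol.1 hk hN
    haveI : Nontrivial ↥(V k) := ⟨⟨⟨s, hsV⟩, 0, by simp [Subtype.ext_iff, hs]⟩⟩
    exact Module.finrank_pos
  have hg : Tendsto (fun k => 1 - (b k : ℝ) / d k) atTop (nhds 0) := by
    have h := (tendsto_const_nhds (x := (1 : ℝ)) (f := (atTop : Filter ℕ))).sub hratio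
    simpa using h
  have key : ∀ (A : ℕ → Set ℕ),
      (∀ k, k0 < k → (A k).ncard ≤ d k - b k) →
      Tendsto (fun k => ((A k).ncard : ℝ) / d k) atTop (nhds 0) := by
    intro A hA
    apply squeeze_zero' (g := fun k => 1 - (b k : ℝ) / d k)
    · filter_upwards with k
      positivity
    · filter_upwards [eventually_gt_atTop k0, hd1] with k hk hdk
      have h2 : ((A k).ncard : ℝ) ≤ ((d k - b k : ℕ) : ℝ) := Nat.cast_le.mpr (hA k hk)
      rw [Nat.cast_sub (hbd k)] at h2
      have hdk' : (0 : ℝ) < d k := Nat.cast_pos.mpr hdk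
      calc ((A k).ncard : ℝ) / d k ≤ ((d k : ℝ) - b k) / d k := by gcongr
        _ = 1 - (b k : ℝ) / d k := by rw [sub_div, div_self (ne_of_gt hdk')]
    · exact hg
  exact ⟨key _ hF, key _ hB⟩
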